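/- The discrete LS algebra A over a totally ordered set with bonds is a normal domain: A is an integral domain and is integrally closed in its field of fractions. -/

import Mathlib

open Finset MvPolynomial

/-- `Mf b i` is `M_i = lcm(b_{i-1}, b_i)`, with the convention `b_{-1} = 1`
(the convention `b_N = 1` is imposed as a hypothesis in the statements). -/
def Mf (b : ℕ → ℕ) (i : ℕ) : ℕ := Nat.lcm (if i = 0 then 1 else b (i - 1)) (b i)

/-- An LS-path of degree `r` over the totally ordered set `{0, …, N}` with bonds `b`:
a function `π : {0,…,N} → ℚ` (modelled as `π : ℕ → ℚ` vanishing above `N`) with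
nonnegative values, integrality `b_j·(π 0 + ⋯ + π j) ∈ ℤ` for all `0 ≤ j ≤ N-1`,
and total sum `π 0 + ⋯ + π N = r`. -/
def IsLSPath (N : ℕ) (b : ℕ → ℕ) (r : ℕ) (π : ℕ → ℚ) : Prop :=
  (∀ i, 0 ≤ π i) ∧ (∀ i, N < i → π i = 0) ∧
  (∀ j < N, ∃ k : ℤ, (b j : ℚ) * (∑ i ∈ Finset.range (j + 1), π i) = k) ∧
  (∑ i ∈ Finset.range (N + 1), π i = r)

/-- `SuppLE π π'` says `max supp π ≤ min supp π'`:
every element of the support of `π` is `≤` every element of the support of `π'`. -/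
def SuppLE (π π' : ℕ → ℚ) : Prop := ∀ i j, π i ≠ 0 → π' j ≠ 0 → i ≤ j

/-- The monomial `x^π = ∏_{i=0}^{N} x_i ^ (M_i · π i)` in `ℂ[x_0,…,x_N]`
(the exponents `M_i · π i` are nonnegative integers for an LS-path `π`). -/
noncomputable def xpow (N : ℕ) (b : ℕ → ℕ) (π : ℕ → ℚ) :
    MvPolynomial (Fin (N + 1)) ℂ :=
  MvPolynomial.monomial
    (Finsupp.equivFunOnFinite.symm fun i : Fin (N + 1) => ⌊(Mf b i : ℚ) * π i⌋₊) (1 : ℂ)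

/-- The discrete LS algebra over `(S, ≤, b)`: the `ℂ`-linear span in `ℂ[x_0,…,x_N]`
of the monomials `x^π`, with `π` ranging over all LS-paths of all degrees. -/
noncomputable def discreteLS (N : ℕ) (b : ℕ → ℕ) :
    Submodule ℂ (MvPolynomial (Fin (N + 1)) ℂ) :=
  Submodule.span ℂ {p | ∃ r π, IsLSPath N b r π ∧ p = xpow N b π}

/-- The degree-`r` graded component `A_r = span_ℂ {x^π : π an LS-path of degree r}`. -/
noncomputable def discreteLSdeg (N : ℕ) (b : ℕ → ℕ) (r : ℕ) :
    Submodule ℂ (MvPolynomial (Fin (N + 1)) ℂ) :=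
  Submodule.span ℂ {p | ∃ π, IsLSPath N b r π ∧ p = xpow N b π}

section Comb

variable (N : ℕ) (b : ℕ → ℕ)

/-- extension of a finsupp on `Fin (N+1)` to `ℕ` -/
def A2N (a : Fin (N + 1) →₀ ℕ) : ℕ → ℕ := fun i => if h : i < N + 1 then a ⟨i, h⟩ else 0

def mu (a : Fin (N + 1) →₀ ℕ) (j : ℕ) : ℚ :=
  (b j : ℚ) * ∑ i ∈ range (j + 1), (A2N N a i : ℚ) / (Mf b i : ℚ)

def Good (a : Fin (N + 1) →₀ ℕ) : Prop := ∀ j ≤ N, ∃ n : ℤ, mu N b a j = n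

variable {N b}

lemma A2N_add (a a' : Fin (N + 1) →₀ ℕ) (i : ℕ) :
    A2N N (a + a') i = A2N N a i + A2N N a' i := by
  unfold A2N; split <;> simp

lemma mu_add (a a' : Fin (N + 1) →₀ ℕ) (j : ℕ) :
    mu N b (a + a') j = mu N b a j + mu N b a' j := by
  unfold mu
  rw [← mul_add, ← Finset.sum_add_distrib]
  congr 1
  refine Finset.sum_congr rfl fun i _ => ?_
  rw [A2N_add]; push_cast; ring

lemma Good_add {a a' : Fin (N + 1) →₀ ℕ} (h : Good N b a) (h' : Good N b a') :
    Good N b (a + a') := by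
  intro j hj
  obtain ⟨n, hn⟩ := h j hj
  obtain ⟨n', hn'⟩ := h' j hj
  exact ⟨n + n', by rw [mu_add, hn, hn']; push_cast; ring⟩

lemma Good_zero : Good N b 0 := by
  intro j hj
  refine ⟨0, ?_⟩
  unfold mu A2N
  simp

variable (hN : 1 ≤ N) (hb : ∀ i < N, 0 < b i) (hbN : b N = 1)
include hb hbN

lemma Mf_pos : ∀ i ≤ N, 0 < Mf b i := by
  intro i hi
  have hbi : 0 < b i := by
    rcases eq_or_lt_of_le hi with h | h
    · subst h; omega
    · exact hb i h
  unfold Mf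
  split
  · exact Nat.lcm_pos one_pos hbi
  · exact Nat.lcm_pos (hb (i-1) (by omega)) hbi

include hN in
/-- integrality of exponents: for an LS path, `M_i * π i` is a natural number. -/
lemma path_exponent_int {r : ℕ} {f : ℕ → ℚ} (hf : IsLSPath N b r f) :
    ∀ i ≤ N, ∃ k : ℕ, (Mf b i : ℚ) * f i = k := by
  obtain ⟨hpos, hvan, hint, hsum⟩ := hf
  intro i hi
  have hMz : ∃ k : ℤ, (Mf b i : ℚ) * f i = k := by
    rcases Nat.eq_zero_or_pos i with rfl | hi0
    · -- i = 0 : Mf b 0 = b 0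
      obtain ⟨k, hk⟩ := hint 0 (by omega)
      refine ⟨k, ?_⟩
      have : Mf b 0 = b 0 := by unfold Mf; simp
      rw [this]
      simpa using hk
    · -- i ≥ 1
      have h1 : (b (i-1)) ∣ Mf b i := by
        unfold Mf; rw [if_neg (by omega)]; exact Nat.dvd_lcm_left _ _
      obtain ⟨d1, hd1⟩ := h1
      obtain ⟨k1, hk1⟩ := hint (i-1) (by omega)
      have e1 : ∃ k : ℤ, (Mf b i : ℚ) * (∑ l ∈ range i, f l) = k := by
        refine ⟨d1 * k1, ?_⟩
        have : (Mf b i : ℚ) = (d1 : ℚ) * (b (i-1) : ℚ) := by rw [hd1]; push_cast; ring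
        rw [show i - 1 + 1 = i from by omega] at hk1
        rw [this, mul_assoc, hk1]
        push_cast; ring
      have e2 : ∃ k : ℤ, (Mf b i : ℚ) * (∑ l ∈ range (i+1), f l) = k := by
        rcases eq_or_lt_of_le hi with h | h
        · subst h
          exact ⟨(Mf b i) * r, by rw [hsum]; push_cast; ring⟩
        · have h2 : (b i) ∣ Mf b i := Nat.dvd_lcm_right _ _
          obtain ⟨d2, hd2⟩ := h2
          obtain ⟨k2, hk2⟩ := hint i h
          refine ⟨d2 * k2, ?_⟩
          have : (Mf b i : ℚ) = (d2 : ℚ) * (b i : ℚ) := by rw [hd2]; push_cast; ring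
          rw [this, mul_assoc, hk2]
          push_cast; ring
      obtain ⟨k2, hk2⟩ := e2
      obtain ⟨k1', hk1'⟩ := e1
      refine ⟨k2 - k1', ?_⟩
      have : f i = (∑ l ∈ range (i+1), f l) - (∑ l ∈ range i, f l) := by
        rw [Finset.sum_range_succ]; ring
      rw [this, mul_sub, hk2, hk1']
      push_cast; ring
  obtain ⟨k, hk⟩ := hMz
  have hknn : (0:ℚ) ≤ k := by
    rw [← hk]
    exact mul_nonneg (by positivity) (hpos i)
  have hk0 : (0:ℤ) ≤ k := by exact_mod_cast hknn
  refine ⟨k.toNat, ?_⟩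
  rw [hk]
  norm_cast
  omega

include hN in
lemma path_floor_eq {r : ℕ} {f : ℕ → ℚ} (hf : IsLSPath N b r f) (i : ℕ) (hi : i ≤ N) :
    ((⌊(Mf b i : ℚ) * f i⌋₊ : ℚ)) = (Mf b i : ℚ) * f i := by
  obtain ⟨k, hk⟩ := path_exponent_int hN hb hbN hf i hi
  rw [hk, Nat.floor_natCast]

include hN in
/-- forward: the exponent vector of an LS path is Good. -/
lemma path_good {r : ℕ} {f : ℕ → ℚ}  (hf : IsLSPath N b r f) :
    Good N b (Finsupp.equivFunOnFinite.symm fun i : Fin (N + 1) => ⌊(Mf b i : ℚ) * f i⌋₊) := by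
  intro j hj
  have hsum : ∑ i ∈ range (j + 1),
      (A2N N (Finsupp.equivFunOnFinite.symm fun i : Fin (N + 1) => ⌊(Mf b i : ℚ) * f i⌋₊) i : ℚ)
        / (Mf b i : ℚ) = ∑ i ∈ range (j + 1), f i := by
    refine Finset.sum_congr rfl fun i hi => ?_
    have hiN : i ≤ N := by have := Finset.mem_range.mp hi; omega
    have h1 : A2N N (Finsupp.equivFunOnFinite.symm fun i : Fin (N + 1) => ⌊(Mf b i : ℚ) * f i⌋₊) i
        = ⌊(Mf b i : ℚ) * f i⌋₊ := by
      unfold A2N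
      rw [dif_pos (by omega)]
      rfl
    rw [h1, path_floor_eq hN hb hbN hf i hiN]
    have hM : (Mf b i : ℚ) ≠ 0 := by
      have := Mf_pos hb hbN i hiN; positivity
    field_simp
  unfold mu
  rw [hsum]
  rcases eq_or_lt_of_le hj with h | h
  · subst h
    refine ⟨r, ?_⟩
    rw [hf.2.2.2, hbN]
    simp
  · exact hf.2.2.1 j h

include hN in
/-- backward: a Good vector is the exponent vector of an LS path. -/
lemma good_path {a : Fin (N + 1) →₀ ℕ} (ha : Good N b a) :
    ∃ r f, IsLSPath N b r f ∧ xpow N b f = MvPolynomial.monomial a 1 := by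
  set f : ℕ → ℚ := fun i => (A2N N a i : ℚ) / (Mf b i : ℚ) with hfdef
  have hM : ∀ i ≤ N, (Mf b i : ℚ) ≠ 0 := fun i hi => by
    have := Mf_pos hb hbN i hi; positivity
  obtain ⟨n, hn⟩ := ha N le_rfl
  have hnn : (0:ℚ) ≤ n := by
    rw [← hn]
    unfold mu
    refine mul_nonneg (by positivity) (Finset.sum_nonneg fun i _ => by positivity)
  refine ⟨n.toNat, f, ⟨fun i => by positivity, fun i hi => ?_, fun j hj => ?_, ?_⟩, ?_⟩
  · -- vanishing
    have : A2N N a i = 0 := by unfold A2N; rw [dif_neg (by omega)]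
    simp [hfdef, this]
  · -- integrality
    obtain ⟨k, hk⟩ := ha j (le_of_lt hj)
    exact ⟨k, by rw [← hk]; rfl⟩
  · -- sum
    have : mu N b a N = ∑ i ∈ range (N + 1), f i := by
      unfold mu
      rw [hbN]
      simp
      rfl
    rw [← this, hn]
    have hn0 : (0:ℤ) ≤ n := by exact_mod_cast hnn
    norm_cast
    omega
  · -- xpow equality
    unfold xpow
    have key : (Finsupp.equivFunOnFinite.symm fun i : Fin (N + 1) => ⌊(Mf b i.1 : ℚ) * f i.1⌋₊) = a := by
      ext i
      rw [Finsupp.equivFunOnFinite_symm_apply_apply]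
      have h1 : f i.1 = (a i : ℚ) / (Mf b i.1 : ℚ) := by
        simp only [hfdef]
        unfold A2N
        rw [dif_pos i.2]
      rw [h1, mul_div_cancel₀ _ (hM i.1 (by omega))]
      exact Nat.floor_natCast _
    rw [key]

end Comb

section Scale

variable {N : ℕ}

noncomputable def scaleHom (c : Fin (N + 1) → ℂ) :
    MvPolynomial (Fin (N + 1)) ℂ →ₐ[ℂ] MvPolynomial (Fin (N + 1)) ℂ :=
  aeval (fun i => C (c i) * X i)

lemma scaleHom_monomial (c : Fin (N + 1) → ℂ) (s : Fin (N + 1) →₀ ℕ) (r : ℂ) :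
    scaleHom c (monomial s r) = (∏ i : Fin (N + 1), c i ^ s i) • monomial s r := by
  rw [scaleHom, aeval_monomial]
  have h1 : (s.prod fun i e => (C (c i) * X i) ^ e)
      = C (∏ i ∈ s.support, c i ^ s i) * s.prod fun i e => (X i : MvPolynomial (Fin (N+1)) ℂ) ^ e := by
    rw [Finsupp.prod, Finsupp.prod, map_prod, ← Finset.prod_mul_distrib]
    exact Finset.prod_congr rfl fun i _ => by rw [mul_pow, map_pow]
  have h2 : (∏ i ∈ s.support, c i ^ s i) = ∏ i : Fin (N + 1), c i ^ s i := by
    refine Finset.prod_subset (Finset.subset_univ _) fun i _ hi => ?_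
    rw [Finsupp.notMem_support_iff.mp hi, pow_zero]
  rw [h1, h2, smul_eq_C_mul, monomial_eq]
  rw [show (algebraMap ℂ (MvPolynomial (Fin (N+1)) ℂ)) r = C r from rfl]
  ring

lemma coeff_scaleHom (c : Fin (N + 1) → ℂ) (q : MvPolynomial (Fin (N + 1)) ℂ)
    (a : Fin (N + 1) →₀ ℕ) :
    coeff a (scaleHom c q) = (∏ i : Fin (N + 1), c i ^ a i) * coeff a q := by
  have h : scaleHom c q
      = ∑ v ∈ q.support, (∏ i : Fin (N + 1), c i ^ v i) • monomial v (coeff v q) := by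
    conv_lhs => rw [q.as_sum, map_sum]
    exact Finset.sum_congr rfl fun v _ => scaleHom_monomial c v (coeff v q)
  rw [h, MvPolynomial.coeff_sum]
  rw [Finset.sum_eq_single a]
  · rw [coeff_smul, coeff_monomial, if_pos rfl, smul_eq_mul]
  · intro v _ hv
    rw [coeff_smul, coeff_monomial, if_neg hv, smul_zero]
  · intro ha
    rw [coeff_smul, coeff_monomial, if_pos rfl, smul_eq_mul,
      MvPolynomial.notMem_support_iff.mp ha, mul_zero]

end Scale

section Lam

variable {N : ℕ} {b : ℕ → ℕ}

noncomputable def cf (b : ℕ → ℕ) (j i : ℕ) : ℂ :=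
  if i ≤ j then Complex.exp ((((b j : ℚ) / (Mf b i : ℚ)) : ℂ) * (2 * Real.pi * Complex.I))
  else 1

lemma lam_eq (a : Fin (N + 1) →₀ ℕ) (j : ℕ) (hj : j ≤ N) :
    (∏ i : Fin (N + 1), cf b j i.1 ^ a i)
      = Complex.exp ((mu N b a j : ℚ) * (2 * Real.pi * Complex.I)) := by
  have h0 : (∏ i : Fin (N + 1), cf b j i.1 ^ a i)
      = ∏ i : Fin (N + 1), (fun l : ℕ => cf b j l ^ A2N N a l) i.1 := by
    refine Finset.prod_congr rfl fun i _ => ?_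
    have : A2N N a i.1 = a i := by unfold A2N; rw [dif_pos i.2]
    rw [← this]
  rw [h0, Fin.prod_univ_eq_prod_range (fun l : ℕ => cf b j l ^ A2N N a l) (N + 1)]
  have h1 : (∏ i ∈ range (j + 1), cf b j i ^ A2N N a i)
      = ∏ i ∈ range (N + 1), cf b j i ^ A2N N a i := by
    refine Finset.prod_subset (Finset.range_subset_range.mpr (by omega)) fun i _ hi => ?_
    have : ¬ i ≤ j := by simp only [Finset.mem_range] at hi; omega
    rw [cf, if_neg this, one_pow]
  rw [← h1]
  have h2 : ∀ i ∈ range (j + 1), cf b j i ^ A2N N a i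
      = Complex.exp ((A2N N a i : ℂ) * ((((b j : ℚ) / (Mf b i : ℚ)) : ℂ) * (2 * Real.pi * Complex.I))) := by
    intro i hi
    have : i ≤ j := by simp only [Finset.mem_range] at hi; omega
    rw [cf, if_pos this, Complex.exp_nat_mul]
  rw [Finset.prod_congr rfl h2, ← Complex.exp_sum]
  congr 1
  have h3 : ((mu N b a j : ℚ) : ℂ)
      = ∑ i ∈ range (j + 1), (A2N N a i : ℂ) * (((b j : ℚ) / (Mf b i : ℚ) : ℚ) : ℂ) := by
    unfold mu
    push_cast [Finset.mul_sum]
    exact Finset.sum_congr rfl fun i _ => by ring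
  rw [h3, Finset.sum_mul]
  exact Finset.sum_congr rfl fun i _ => by push_cast; ring

lemma lam_eq_one_iff (a : Fin (N + 1) →₀ ℕ) (j : ℕ) (hj : j ≤ N) :
    (∏ i : Fin (N + 1), cf b j i.1 ^ a i) = 1 ↔ ∃ n : ℤ, mu N b a j = n := by
  rw [lam_eq a j hj]
  constructor
  · intro h
    obtain ⟨n, hn⟩ := Complex.exp_eq_one_iff.mp h
    have := mul_right_cancel₀ Complex.two_pi_I_ne_zero hn
    exact ⟨n, by exact_mod_cast this⟩
  · rintro ⟨n, hn⟩
    rw [hn]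
    push_cast
    exact Complex.exp_int_mul_two_pi_mul_I n

end Lam

section Main

variable {N : ℕ} {b : ℕ → ℕ}

noncomputable def tau (N : ℕ) (b : ℕ → ℕ) (j : ℕ) :
    MvPolynomial (Fin (N + 1)) ℂ →ₐ[ℂ] MvPolynomial (Fin (N + 1)) ℂ :=
  scaleHom (fun i : Fin (N + 1) => cf b j i.1)

lemma good_iff_fixed (q : MvPolynomial (Fin (N + 1)) ℂ) :
    (∀ a ∈ q.support, Good N b a) ↔ ∀ j ≤ N, tau N b j q = q := by
  constructor
  · intro h j hj
    apply MvPolynomial.ext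
    intro a
    rw [tau, coeff_scaleHom]
    by_cases h0 : coeff a q = 0
    · rw [h0, mul_zero]
    · have ha : a ∈ q.support := MvPolynomial.mem_support_iff.mpr h0
      rw [(lam_eq_one_iff a j hj).mpr (h a ha j hj), one_mul]
  · intro h a ha j hj
    have h1 := congrArg (coeff a) (h j hj)
    rw [tau, coeff_scaleHom] at h1
    have h0 : coeff a q ≠ 0 := MvPolynomial.mem_support_iff.mp ha
    have h2 : (∏ i : Fin (N + 1), cf b j i.1 ^ a i) = 1 := by
      have := mul_right_cancel₀ h0 (h1.trans (one_mul (coeff a q)).symm)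
      exact this
    exact (lam_eq_one_iff a j hj).mp h2

variable (N b) in
noncomputable def LSalg : Subalgebra ℂ (MvPolynomial (Fin (N + 1)) ℂ) where
  carrier := {q | ∀ a ∈ q.support, Good N b a}
  mul_mem' := by
    intro p q hp hq a ha
    classical
    have h1 := MvPolynomial.support_mul p q ha
    rw [Finset.mem_add] at h1
    obtain ⟨u, hu, v, hv, rfl⟩ := h1
    exact Good_add (hp u hu) (hq v hv)
  one_mem' := by
    intro a ha
    have h1 : (1 : MvPolynomial (Fin (N + 1)) ℂ) = monomial 0 1 := by
      rw [MvPolynomial.monomial_zero']; rfl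
    rw [h1, support_monomial, if_neg one_ne_zero, Finset.mem_singleton] at ha
    subst ha
    exact Good_zero
  add_mem' := by
    intro p q hp hq a ha
    classical
    rcases Finset.mem_union.mp (MvPolynomial.support_add ha) with h | h
    · exact hp a h
    · exact hq a h
  zero_mem' := by
    intro a ha
    simp at ha
  algebraMap_mem' := by
    intro r a ha
    by_cases hr : r = 0
    · subst hr; simp at ha
    · have h1 : algebraMap ℂ (MvPolynomial (Fin (N + 1)) ℂ) r = monomial 0 r := by
        rw [MvPolynomial.monomial_zero']; rfl
      rw [h1, support_monomial, if_neg hr, Finset.mem_singleton] at ha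
      subst ha
      exact Good_zero

lemma mem_LSalg_iff (q : MvPolynomial (Fin (N + 1)) ℂ) :
    q ∈ LSalg N b ↔ ∀ a ∈ q.support, Good N b a := Iff.rfl

variable (hN : 1 ≤ N) (hb : ∀ i < N, 0 < b i) (hbN : b N = 1)
include hN hb hbN

lemma LSalg_toSubmodule : Subalgebra.toSubmodule (LSalg N b) = discreteLS N b := by
  apply le_antisymm
  · intro q hq
    rw [Subalgebra.mem_toSubmodule, mem_LSalg_iff] at hq
    rw [discreteLS]
    rw [q.as_sum]
    refine Submodule.sum_mem _ fun v hv => ?_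
    obtain ⟨r, f, hf, hx⟩ := good_path hN hb hbN (hq v hv)
    have h1 : (monomial v) (coeff v q) = (coeff v q) • (monomial v (1 : ℂ)) := by
      rw [MvPolynomial.smul_monomial, smul_eq_mul, mul_one]
    rw [h1]
    exact Submodule.smul_mem _ _ (Submodule.subset_span ⟨r, f, hf, hx.symm⟩)
  · rw [discreteLS, Submodule.span_le]
    rintro p ⟨r, f, hf, rfl⟩
    rw [SetLike.mem_coe, Subalgebra.mem_toSubmodule, mem_LSalg_iff]
    intro a ha
    rw [xpow, support_monomial, if_neg one_ne_zero, Finset.mem_singleton] at ha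
    subst ha
    exact path_good hN hb hbN hf

omit hN hbN hb in
lemma LSalg_cancel {p g : MvPolynomial (Fin (N + 1)) ℂ} (hg : g ∈ LSalg N b) (hg0 : g ≠ 0)
    (hpg : p * g ∈ LSalg N b) : p ∈ LSalg N b := by
  rw [mem_LSalg_iff, good_iff_fixed] at *
  intro j hj
  have h1 : tau N b j p * tau N b j g = p * g := by
    rw [← map_mul]; exact hpg j hj
  rw [hg j hj] at h1
  exact mul_right_cancel₀ hg0 h1

omit hN hb hbN in
set_option maxHeartbeats 1000000 in
set_option synthInstance.maxHeartbeats 1000000 in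
lemma subalg_ic {n : ℕ} (T : Subalgebra ℂ (MvPolynomial (Fin n) ℂ))
    (hcancel : ∀ p g : MvPolynomial (Fin n) ℂ, g ∈ T → g ≠ 0 → p * g ∈ T → p ∈ T) :
    IsIntegrallyClosed ↥T := by
  classical
  rw [isIntegrallyClosed_iff (FractionRing ↥T)]
  intro x hx
  set R := MvPolynomial (Fin n) ℂ with hR
  haveI htow : IsScalarTower ↥T R (FractionRing R) := inferInstance
  haveI htow2 : IsScalarTower ↥T ↥T (FractionRing R) := inferInstance
  let g : ↥T →+* FractionRing R :=
    (algebraMap R (FractionRing R)).comp (Subalgebra.val T).toRingHom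
  have hg : ∀ y : ↥T, g y = algebraMap ↥T (FractionRing R) y :=
    fun y => (IsScalarTower.algebraMap_apply ↥T R (FractionRing R) y).symm
  have hginj : Function.Injective g :=
    (IsFractionRing.injective R (FractionRing R)).comp Subtype.val_injective
  let ι : FractionRing ↥T →+* FractionRing R := IsFractionRing.lift hginj
  let ιa : FractionRing ↥T →ₐ[↥T] FractionRing R :=
    { toRingHom := ι,
      commutes' := fun y => (IsFractionRing.lift_algebraMap hginj y).trans (hg y) }
  have hint : IsIntegral R (ι x) := IsIntegral.tower_top (A := R) (hx.map ιa)
  obtain ⟨p, hp⟩ := IsIntegrallyClosed.isIntegral_iff.mp hint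
  obtain ⟨⟨s, t⟩, hst⟩ := IsLocalization.surj (nonZeroDivisors ↥T) x
  have h2 : p * ((t : ↥T) : R) = ((s : ↥T) : R) := by
    apply IsFractionRing.injective R (FractionRing R)
    have h3 := congrArg ι hst
    rw [map_mul, IsFractionRing.lift_algebraMap hginj, IsFractionRing.lift_algebraMap hginj] at h3
    rw [map_mul, hp]
    exact h3
  have ht0 : ((t : ↥T) : R) ≠ 0 := by
    intro h
    apply nonZeroDivisors.ne_zero t.2
    exact Subtype.val_injective (by simpa using h)
  have hmem : p ∈ T := by
    refine hcancel p _ (t : ↥T).2 ht0 ?_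
    rw [h2]
    exact (s : ↥T).2
  refine ⟨⟨p, hmem⟩, ?_⟩
  apply ι.injective
  rw [IsFractionRing.lift_algebraMap hginj]
  rw [show g ⟨p, hmem⟩ = algebraMap R (FractionRing R) p from rfl, hp]

omit hN hb hbN in
lemma LSalg_integrallyClosed : IsIntegrallyClosed ↥(LSalg N b) :=
  subalg_ic (LSalg N b) fun p g hg hg0 hpg => LSalg_cancel hg hg0 hpg

end Main

/-- The discrete LS algebra over a totally ordered set with bonds is a normal domain:
it is a subalgebra of `ℂ[x_0,…,x_N]` which is an integral domain and is integrally
closed in its field of fractions. -/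
theorem stmt7 (N : ℕ) (hN : 1 ≤ N) (b : ℕ → ℕ) (hb : ∀ i < N, 0 < b i) (hbN : b N = 1) :
    ∃ S : Subalgebra ℂ (MvPolynomial (Fin (N + 1)) ℂ),
      Subalgebra.toSubmodule S = discreteLS N b ∧ IsDomain ↥S ∧ IsIntegrallyClosed ↥S := by
  exact ⟨LSalg N b, LSalg_toSubmodule hN hb hbN, inferInstance, LSalg_integrallyClosed⟩
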